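/- Fix μ̃ > 0, σ > 0, θ̃ ∈ ℝ, S₀ > 0 and T > 0, and define the XOU futures curve f(T) := exp( e^{−μ̃T}·ln S₀ + (1 − e^{−μ̃T})(θ̃ − σ²/(2μ̃)) + (σ²/(4μ̃))(1 − e^{−2μ̃T}) ). If θ̃ − (σ²/(2μ̃))(1 − e^{−μ̃T}) < ln S₀ < θ̃ − (σ²/(2μ̃))(1 − e^{−μ̃T}) + ( e^{2μ̃T}/4 + σ²/(2μ̃) )^{1/2} − e^{μ̃T}/2, then the first derivative of f at T is strictly negative and the second derivative of f at T is strictly negative (the futures curve is downward-sloping and concave at T). -/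

import Mathlib

open Real

set_option maxHeartbeats 1000000 in
/-- XOU futures term structure: downward-sloping and concave in the middle-upper band. -/
theorem xou_term_structure_down_concave (μt θt σ S0 T : ℝ) (hμ : 0 < μt) (hσ : 0 < σ) (hS : 0 < S0)
    (hT : 0 < T) (f : ℝ → ℝ)
    (hf : f = fun T : ℝ => exp (exp (-μt * T) * log S0
      + (1 - exp (-μt * T)) * (θt - σ ^ 2 / (2 * μt))
      + σ ^ 2 / (4 * μt) * (1 - exp (-2 * μt * T))))
    (hln1 : θt - σ ^ 2 / (2 * μt) * (1 - exp (-μt * T)) < log S0) (hln2 : log S0 < θt - σ ^ 2 / (2 * μt) * (1 - exp (-μt * T)) + Real.sqrt (exp (2 * μt * T) / 4 + σ ^ 2 / (2 * μt)) - exp (μt * T) / 2) :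
    deriv f T < 0 ∧ deriv (deriv f) T < 0 := by
  subst hf
  have hE : ∀ (a t : ℝ), HasDerivAt (fun s : ℝ => Real.exp (a * s)) (a * Real.exp (a * t)) t := by
    intro a t
    simpa [mul_comm] using ((hasDerivAt_id t).const_mul a).exp
  set x := log S0 with hx
  set c := θt - σ ^ 2 / (2 * μt) with hc
  set k := σ ^ 2 / (4 * μt) with hk
  set g : ℝ → ℝ := fun s => exp (-μt * s) * x + (1 - exp (-μt * s)) * c
      + k * (1 - exp (-2 * μt * s)) with hgdef
  set G : ℝ → ℝ := fun t => (-μt) * exp (-μt * t) * x - (-μt) * exp (-μt * t) * c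
      + k * (2 * μt * exp (-2 * μt * t)) with hGdef
  have hg : ∀ t, HasDerivAt g (G t) t := by
    intro t
    have h1 := ((hE (-μt) t).mul_const x)
    have h2 := ((hasDerivAt_const t (1:ℝ)).sub (hE (-μt) t)).mul_const c
    have h3 := ((hasDerivAt_const t (1:ℝ)).sub (hE (-2*μt) t)).const_mul k
    have h := (h1.add h2).add h3
    refine h.congr_deriv ?_
    simp only [hGdef]
    ring
  have hfd : ∀ t, HasDerivAt (fun s => exp (g s)) (exp (g t) * G t) t := fun t => (hg t).exp
  have hderiv : deriv (fun s => exp (g s)) = fun t => exp (g t) * G t :=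
    funext fun t => (hfd t).deriv
  set G2 : ℝ := (-μt) * ((-μt) * exp (-μt * T)) * x - (-μt) * ((-μt) * exp (-μt * T)) * c
      + k * (2 * μt * ((-2*μt) * exp (-2 * μt * T))) with hG2def
  have hGd : HasDerivAt G G2 T := by
    have h1 := ((hE (-μt) T).const_mul (-μt)).mul_const x
    have h2 := ((hE (-μt) T).const_mul (-μt)).mul_const c
    have h3 := (((hE (-2*μt) T).const_mul (2*μt))).const_mul k
    have h := (h1.sub h2).add h3
    exact h
  have hd2 : HasDerivAt (fun t => exp (g t) * G t)
      (exp (g T) * G T * G T + exp (g T) * G2) T := (hfd T).mul hGd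
  -- change the goal to be about g, G
  rw [show (deriv fun T : ℝ => exp (exp (-μt * T) * x + (1 - exp (-μt * T)) * c
        + k * (1 - exp (-2 * μt * T)))) = fun t => exp (g t) * G t from hderiv]
  have goal2 : deriv (fun t => exp (g t) * G t) T = exp (g T) * G T * G T + exp (g T) * G2 :=
    hd2.deriv
  -- numeric setup
  set u := exp (-μt * T) with hu_def
  have hu : 0 < u := exp_pos _
  set e := exp (μt * T) with he_def
  have hepos : 0 < e := exp_pos _
  have he : e * u = 1 := by
    rw [he_def, hu_def, ← exp_add, show μt * T + -μt * T = 0 by ring, exp_zero]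
  have hu2 : exp (-2 * μt * T) = u * u := by
    rw [hu_def, ← exp_add]; ring_nf
  have he2 : exp (2 * μt * T) = e * e := by
    rw [he_def, ← exp_add]; ring_nf
  have h2k : σ ^ 2 / (2 * μt) = 2 * k := by
    rw [hk]; field_simp; ring
  have hkpos : 0 < k := by rw [hk]; positivity
  have hm : σ ^ 2 / (2 * μt) * (1 - u) = 2 * k - 2 * k * u := by
    rw [h2k]; ring
  have hs_nonneg : (0:ℝ) ≤ exp (2 * μt * T) / 4 + σ ^ 2 / (2 * μt) := by positivity
  have hs_sq : Real.sqrt (exp (2 * μt * T) / 4 + σ ^ 2 / (2 * μt)) ^ 2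
      = e * e / 4 + 2 * k := by
    rw [sq_sqrt hs_nonneg, he2, h2k]
  have hs_nn : 0 ≤ Real.sqrt (exp (2 * μt * T) / 4 + σ ^ 2 / (2 * μt)) := Real.sqrt_nonneg _
  set s := Real.sqrt (exp (2 * μt * T) / 4 + σ ^ 2 / (2 * μt)) with hs_def
  have hGT : G T = -(μt * u * x - μt * u * c - 2 * μt * k * (u * u)) := by
    simp only [hGdef]; rw [hu2]; ring
  have hG2v : G2 = μt ^ 2 * u * (x - c) - 4 * μt ^ 2 * k * (u * u) := by
    rw [hG2def, hu2]; ring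
  rw [hm] at hln1 hln2
  have hEgT : 0 < exp (g T) := exp_pos _
  set A := exp (g T) with hA_def
  set D := x - c - 2 * k * u with hD_def
  -- make everything opaque
  clear_value x c k u e s A D
  clear hm hu_def he_def hu2 he2 hs_nonneg hs_def hgdef hGdef hG2def hk hx hE hg hfd
  have hD : 0 < D := by rw [hD_def, hc, h2k]; linarith
  have hsq : (D + e / 2) ^ 2 < e * e / 4 + 2 * k := by
    have ha : D + e / 2 < s := by rw [hD_def, hc, h2k]; linarith
    have hapos : (0:ℝ) < D + e / 2 := by linarith
    calc (D + e / 2) ^ 2 < s ^ 2 := by nlinarith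
    _ = e * e / 4 + 2 * k := hs_sq
  have h1 : D ^ 2 + D * e < 2 * k := by nlinarith [hsq]
  have key : u * D ^ 2 + D - 2 * k * u < 0 := by
    have hne : D ^ 2 + D * e - 2 * k < 0 := by linarith
    have hmn := mul_neg_of_pos_of_neg hu hne
    nlinarith [hmn, he, hD]
  have hGT' : G T = -(μt * u * D) := by rw [hGT, hD_def]; ring
  have hG2v' : G2 = μt ^ 2 * u * (D - 2 * k * u) := by rw [hG2v, hD_def]; ring
  constructor
  · have hb : (fun t => exp (g t) * G t) T = A * G T := by rw [hA_def]
    rw [hb, hGT']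
    have hpos : 0 < μt * u * D := mul_pos (mul_pos hμ hu) hD
    nlinarith
  · rw [goal2]
    have hfac : A * G T * G T + A * G2
        = A * (μt ^ 2 * u * (u * D ^ 2 + D - 2 * k * u)) := by
      rw [hGT', hG2v']; ring
    rw [hfac]
    exact mul_neg_of_pos_of_neg hEgT
      (mul_neg_of_pos_of_neg (by positivity) key)
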